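/- For integers m ≥ 2 and r ≥ 1, the coefficients α_{m,r}(i) satisfy: (1) α_{m,r}(r) = m^r, and (2) if r ≥ 2, then 2·α_{m,r}(r−1) = −(r−1)(m−1)m^{r−1}, i.e., α_{m,r}(r−1) = −(1/2)(r−1)(m−1)m^{r−1}. -/

import Mathlib

open Polynomial Finset

private lemma nat_prod_asc (n k : ℕ) : ∏ j ∈ range k, (n + j) = n.ascFactorial k := by
  induction k with
  | zero => simp [Nat.ascFactorial_zero]
  | succ k ih => rw [prod_range_succ, ih, Nat.ascFactorial_succ, mul_comm]

private lemma coeff_mul_lin (p : Polynomial ℚ) (a b : ℚ) (k : ℕ) :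
    (p * (C a * X + C b)).coeff (k + 1) = a * p.coeff k + b * p.coeff (k + 1) := by
  rw [mul_add, coeff_add, coeff_mul_C, show p * (C a * X) = C a * p * X by ring,
    coeff_mul_X, coeff_C_mul]
  ring

private lemma natDegree_prod_lin (a : ℚ) (c : ℕ → ℚ) (k : ℕ) :
    (∏ j ∈ range k, (C a * X + C (c j))).natDegree ≤ k := by
  refine le_trans (natDegree_prod_le _ _) ?_
  calc ∑ j ∈ range k, (C a * X + C (c j)).natDegree ≤ ∑ _j ∈ range k, 1 := by
        refine Finset.sum_le_sum fun j _ => ?_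
        exact natDegree_linear_le
    _ = k := by simp

private lemma coeff_top_lin (a : ℚ) (c : ℕ → ℚ) (k : ℕ) :
    (∏ j ∈ range k, (C a * X + C (c j))).coeff k = a ^ k := by
  induction k with
  | zero => simp
  | succ k ih =>
    rw [prod_range_succ, coeff_mul_lin, ih, coeff_eq_zero_of_natDegree_lt
        (lt_of_le_of_lt (natDegree_prod_lin a c k) (Nat.lt_succ_self k))]
    ring

private lemma coeff_sub_one_lin (a : ℚ) (c : ℕ → ℚ) (k : ℕ) :
    (∏ j ∈ range (k + 1), (C a * X + C (c j))).coeff k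
      = a ^ k * ∑ j ∈ range (k + 1), c j := by
  induction k with
  | zero => simp
  | succ k ih =>
    rw [prod_range_succ, coeff_mul_lin, ih, coeff_top_lin, sum_range_succ _ (k + 1)]
    ring

private lemma eval_prod_lin (a : ℕ) (n : ℕ) (k : ℕ) :
    (∏ j ∈ range k, (C (a : ℚ) * X + C (j : ℚ))).eval (n : ℚ)
      = ((a * n).ascFactorial k : ℚ) := by
  rw [← nat_prod_asc]
  push_cast
  rw [eval_prod]
  exact Finset.prod_congr rfl fun j _ => by simp [mul_comm]

/-- The coefficients `α_{m,r}(i)` satisfy `α_{m,r}(r) = m^r` and, for `r ≥ 2`,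
`2·α_{m,r}(r-1) = -(r-1)(m-1)m^(r-1)`. -/
theorem alpha_top_coeffs (m r : ℕ) (hm : 2 ≤ m) (hr : 1 ≤ r) (α : ℕ → ℤ)
    (hα : ∀ n : ℕ, 1 ≤ n →
      ((m * n + r - 1).choose r : ℤ) =
        ∑ i ∈ Finset.Icc 1 r, α i * ((n + i - 1).choose i)) :
    α r = (m : ℤ) ^ r ∧
      (2 ≤ r → 2 * α (r - 1) = -(((r : ℤ) - 1) * ((m : ℤ) - 1) * (m : ℤ) ^ (r - 1))) := by
  -- Define the polynomial F over ℚ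
  set P : Polynomial ℚ := ∏ j ∈ range r, (C (m : ℚ) * X + C (j : ℚ)) with hP
  set Q : ℕ → Polynomial ℚ := fun i => ∏ j ∈ range i, (C (1 : ℚ) * X + C (j : ℚ)) with hQ
  set F : Polynomial ℚ := P - ∑ i ∈ Finset.Icc 1 r,
    C ((α i : ℚ) * ((Nat.factorial r : ℚ) / (Nat.factorial i : ℚ))) * Q i with hF
  have hFroot : ∀ n : ℕ, 1 ≤ n → F.eval (n : ℚ) = 0 := by
    intro n hn
    have key := hα n hn
    have hP_eval : P.eval (n : ℚ) = (Nat.factorial r : ℚ) * ((m * n + r - 1).choose r : ℚ) := by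
      rw [hP, eval_prod_lin, Nat.ascFactorial_eq_factorial_mul_choose']
      push_cast; ring
    have hQ_eval : ∀ i, (Q i).eval (n : ℚ) = (Nat.factorial i : ℚ) * ((n + i - 1).choose i : ℚ) := by
      intro i
      have := eval_prod_lin 1 n i
      rw [hQ]
      simp only [Nat.cast_one] at this ⊢
      rw [this, one_mul, Nat.ascFactorial_eq_factorial_mul_choose']
      push_cast; ring
    rw [hF, eval_sub, eval_finset_sum, hP_eval, sub_eq_zero]
    have : ∀ i ∈ Finset.Icc 1 r,
        (C ((α i : ℚ) * ((Nat.factorial r : ℚ) / (Nat.factorial i : ℚ))) * Q i).eval (n : ℚ)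
          = (Nat.factorial r : ℚ) * ((α i : ℚ) * ((n + i - 1).choose i : ℚ)) := by
      intro i _
      rw [eval_mul, eval_C, hQ_eval]
      field_simp
    rw [Finset.sum_congr rfl this, ← Finset.mul_sum]
    have : ((m * n + r - 1).choose r : ℚ) = ∑ i ∈ Finset.Icc 1 r,
        (α i : ℚ) * ((n + i - 1).choose i : ℚ) := by
      exact_mod_cast congrArg (Int.cast : ℤ → ℚ) key
    rw [this]
  have hF0 : F = 0 := by
    apply eq_zero_of_infinite_isRoot
    apply Set.Infinite.mono (s := (Nat.cast : ℕ → ℚ) '' (Set.Ici 1))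
    · rintro x ⟨n, hn, rfl⟩
      exact hFroot n hn
    · exact Set.Infinite.image (Set.injOn_of_injective Nat.cast_injective) (Set.Ici_infinite 1)
  have hrfac : (Nat.factorial r : ℚ) ≠ 0 := Nat.cast_ne_zero.mpr (Nat.factorial_ne_zero r)
  -- coefficient r of F
  have hQdeg : ∀ i, i < r → ∀ k, i < k → (Q i).coeff k = 0 := by
    intro i _ k hk
    exact coeff_eq_zero_of_natDegree_lt (lt_of_le_of_lt (natDegree_prod_lin _ _ _) hk)
  have hcoeffr : F.coeff r = 0 := by rw [hF0]; simp
  have hsum_coeff : ∀ k, (∑ i ∈ Finset.Icc 1 r,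
      C ((α i : ℚ) * ((Nat.factorial r : ℚ) / (Nat.factorial i : ℚ))) * Q i).coeff k
        = ∑ i ∈ Finset.Icc 1 r, (α i : ℚ) * ((Nat.factorial r : ℚ) / (Nat.factorial i : ℚ)) * (Q i).coeff k := by
    intro k
    rw [finset_sum_coeff]
    exact Finset.sum_congr rfl fun i _ => by rw [coeff_C_mul]
  have hαr : (α r : ℚ) = (m : ℚ) ^ r := by
    have h1 : F.coeff r = (m : ℚ) ^ r - (α r : ℚ) := by
      rw [hF, coeff_sub, hP, coeff_top_lin, hsum_coeff]
      have : ∀ i ∈ Finset.Icc 1 r,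
          (α i : ℚ) * ((Nat.factorial r : ℚ) / (Nat.factorial i : ℚ)) * (Q i).coeff r
            = if i = r then (α r : ℚ) else 0 := by
        intro i hi
        rcases eq_or_lt_of_le (Finset.mem_Icc.mp hi).2 with h | h
        · subst h
          rw [if_pos rfl, hQ]
          rw [coeff_top_lin]
          field_simp
          simp
        · rw [if_neg (by omega), hQdeg i h r h, mul_zero]
      rw [Finset.sum_congr rfl this, Finset.sum_ite_eq' _ r]
      simp [Finset.mem_Icc, hr]
    rw [hcoeffr] at h1
    linarith [h1]
  constructor
  · exact_mod_cast hαr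
  · intro hr2
    -- coefficient r-1 of F
    have hcoeffr1 : F.coeff (r - 1) = 0 := by rw [hF0]; simp
    have hrw : r = (r - 1) + 1 := by omega
    have hPr1 : P.coeff (r - 1) = (m : ℚ) ^ (r - 1) * ∑ j ∈ range r, (j : ℚ) := by
      rw [hP, hrw]
      simp only [Nat.add_sub_cancel]
      rw [coeff_sub_one_lin]
    have hQr1 : (Q r).coeff (r - 1) = ∑ j ∈ range r, (j : ℚ) := by
      show (∏ j ∈ range r, (C (1 : ℚ) * X + C (j : ℚ))).coeff (r - 1) = _
      rw [hrw]
      simp only [Nat.add_sub_cancel]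
      rw [coeff_sub_one_lin]
      simp
    have hQr1' : (Q (r - 1)).coeff (r - 1) = 1 := by
      rw [hQ, coeff_top_lin]; simp
    have hS : (∑ j ∈ range r, (j : ℚ)) * 2 = (r : ℚ) * ((r : ℚ) - 1) := by
      have h2 := congrArg (Nat.cast : ℕ → ℚ) (Finset.sum_range_id_mul_two r)
      push_cast [Nat.cast_sub hr] at h2
      exact_mod_cast h2
    have h1 : F.coeff (r - 1) = (m : ℚ) ^ (r - 1) * ∑ j ∈ range r, (j : ℚ)
        - ((α r : ℚ) * (∑ j ∈ range r, (j : ℚ))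
          + (α (r - 1) : ℚ) * ((Nat.factorial r : ℚ) / (Nat.factorial (r - 1) : ℚ))) := by
      rw [hF, coeff_sub, hPr1, hsum_coeff]
      have : ∀ i ∈ Finset.Icc 1 r,
          (α i : ℚ) * ((Nat.factorial r : ℚ) / (Nat.factorial i : ℚ)) * (Q i).coeff (r - 1)
            = (if i = r then (α r : ℚ) * (∑ j ∈ range r, (j : ℚ)) else 0)
              + (if i = r - 1 then (α (r - 1) : ℚ) * ((Nat.factorial r : ℚ) / (Nat.factorial (r - 1) : ℚ)) else 0) := by
        intro i hi
        have hir := (Finset.mem_Icc.mp hi).2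
        rcases eq_or_lt_of_le hir with h | h
        · subst h
          rw [if_pos rfl, if_neg (by omega), hQr1]
          field_simp
          simp
        · rcases eq_or_lt_of_le (Nat.le_sub_one_of_lt h) with h' | h'
          · rw [if_neg (by omega), if_pos h', h', hQr1']
            ring
          · rw [if_neg (by omega), if_neg (by omega), hQdeg i (by omega) (r - 1) h', mul_zero]
            norm_num
      rw [Finset.sum_congr rfl this, Finset.sum_add_distrib,
        Finset.sum_ite_eq' _ r, Finset.sum_ite_eq' _ (r - 1)]
      have h1r : r ∈ Finset.Icc 1 r := Finset.mem_Icc.mpr ⟨hr, le_refl r⟩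
      have h2r : r - 1 ∈ Finset.Icc 1 r := Finset.mem_Icc.mpr ⟨by omega, by omega⟩
      rw [if_pos h1r, if_pos h2r]
    rw [hcoeffr1, hαr] at h1
    have hfac : (Nat.factorial r : ℚ) / (Nat.factorial (r - 1) : ℚ) = (r : ℚ) := by
      have : Nat.factorial r = r * Nat.factorial (r - 1) := by
        conv_lhs => rw [hrw]
        rw [Nat.factorial_succ, ← hrw]
      rw [this]
      have : (Nat.factorial (r - 1) : ℚ) ≠ 0 := Nat.cast_ne_zero.mpr (Nat.factorial_ne_zero _)
      field_simp
      push_cast; ring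
    rw [hfac] at h1
    -- now: 0 = m^(r-1) * S - (m^r * S + α(r-1) * r)
    have hmr : (m : ℚ) ^ r = (m : ℚ) ^ (r - 1) * (m : ℚ) := by
      conv_lhs => rw [hrw]
      rw [pow_succ]
    have hrQ : (r : ℚ) ≠ 0 := Nat.cast_ne_zero.mpr (by omega)
    have key : 2 * (α (r - 1) : ℚ)
        = -(((r : ℚ) - 1) * ((m : ℚ) - 1) * (m : ℚ) ^ (r - 1)) := by
      have h2 : (α (r - 1) : ℚ) * (r : ℚ) * 2
          = ((m : ℚ) ^ (r - 1) - (m : ℚ) ^ r) * ((∑ j ∈ range r, (j : ℚ)) * 2) := by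
        linarith [h1]
      rw [hS, hmr] at h2
      apply mul_left_cancel₀ hrQ
      rw [show (r : ℚ) * (2 * (α (r - 1) : ℚ)) = (α (r - 1) : ℚ) * r * 2 by ring, h2]
      ring
    have : ((2 * α (r - 1) : ℤ) : ℚ)
        = ((-(((r : ℤ) - 1) * ((m : ℤ) - 1) * (m : ℤ) ^ (r - 1)) : ℤ) : ℚ) := by
      push_cast
      convert key using 2
    exact_mod_cast this
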